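/- Let A be an n×m complex matrix and D, E be m×n complex matrices. Then A is both left and right (D,E)-invertible if and only if range(EAD) = range(E) and ker(EAD) = ker(D). Furthermore, in this case rank(E) = rank(D). -/

import Mathlib

open Matrix

-- If ker f ≤ ker g, then g factors as G ∘ f.
lemma factor_ker {K V W W' : Type*} [Field K] [AddCommGroup V] [AddCommGroup W]
    [AddCommGroup W'] [Module K V] [Module K W] [Module K W']
    (f : V →ₗ[K] W) (g : V →ₗ[K] W') (h : LinearMap.ker f ≤ LinearMap.ker g) :
    ∃ G : W →ₗ[K] W', G ∘ₗ f = g := by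
  -- map on range f
  let G₀ : LinearMap.range f →ₗ[K] W' :=
    ((LinearMap.ker f).liftQ g h) ∘ₗ (f.quotKerEquivRange.symm : LinearMap.range f →ₗ[K] _)
  obtain ⟨G, hG⟩ := LinearMap.exists_extend G₀
  refine ⟨G, ?_⟩
  ext v
  have h1 : f.quotKerEquivRange.symm ⟨f v, LinearMap.mem_range_self f v⟩ =
      Submodule.Quotient.mk v := by
    apply f.quotKerEquivRange.injective
    simp [LinearMap.quotKerEquivRange_apply_mk]
  have h2 : G (f v) = G₀ ⟨f v, LinearMap.mem_range_self f v⟩ := by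
    rw [← hG]; rfl
  simp only [LinearMap.comp_apply, h2, G₀, LinearMap.coe_comp, Function.comp_apply, h1]
  simp [Submodule.liftQ_apply]

-- If range g ≤ range f, then g factors as f ∘ H.
lemma factor_range {K V V' W : Type*} [Field K] [AddCommGroup V] [AddCommGroup V']
    [AddCommGroup W] [Module K V] [Module K V'] [Module K W]
    (f : V →ₗ[K] W) (g : V' →ₗ[K] W) (h : LinearMap.range g ≤ LinearMap.range f) :
    ∃ H : V' →ₗ[K] V, f ∘ₗ H = g := by
  obtain ⟨s, hs⟩ := f.rangeRestrict.exists_rightInverse_of_surjective f.range_rangeRestrict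
  refine ⟨s ∘ₗ (g.codRestrict (LinearMap.range f) fun v => h (LinearMap.mem_range_self g v)), ?_⟩
  ext v
  have : f.rangeRestrict (s ⟨g v, h (LinearMap.mem_range_self g v)⟩) =
      ⟨g v, h (LinearMap.mem_range_self g v)⟩ := by
    rw [← LinearMap.comp_apply, hs]; rfl
  exact congrArg Subtype.val this

lemma mulVecLin_inj {m n : ℕ} {M N : Matrix (Fin m) (Fin n) ℂ}
    (h : M.mulVecLin = N.mulVecLin) : M = N := by
  have : Matrix.toLin' M = Matrix.toLin' N := by
    rw [Matrix.toLin'_apply', Matrix.toLin'_apply', h]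
  exact Matrix.toLin'.injective this

theorem stmt5 (n m : ℕ) (A : Matrix (Fin n) (Fin m) ℂ) (D E : Matrix (Fin m) (Fin n) ℂ) :
    (((∃ C : Matrix (Fin m) (Fin n) ℂ, C * A * D = D ∧
        LinearMap.ker E.mulVecLin ≤ LinearMap.ker C.mulVecLin) ∧
      (∃ B : Matrix (Fin m) (Fin n) ℂ, E * A * B = E ∧
        LinearMap.range B.mulVecLin ≤ LinearMap.range D.mulVecLin)) ↔
      (LinearMap.range (E * A * D).mulVecLin = LinearMap.range E.mulVecLin ∧
        LinearMap.ker (E * A * D).mulVecLin = LinearMap.ker D.mulVecLin)) ∧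
    (((∃ C : Matrix (Fin m) (Fin n) ℂ, C * A * D = D ∧
        LinearMap.ker E.mulVecLin ≤ LinearMap.ker C.mulVecLin) ∧
      (∃ B : Matrix (Fin m) (Fin n) ℂ, E * A * B = E ∧
        LinearMap.range B.mulVecLin ≤ LinearMap.range D.mulVecLin)) →
      E.rank = D.rank) := by
  have main : ((∃ C : Matrix (Fin m) (Fin n) ℂ, C * A * D = D ∧
        LinearMap.ker E.mulVecLin ≤ LinearMap.ker C.mulVecLin) ∧
      (∃ B : Matrix (Fin m) (Fin n) ℂ, E * A * B = E ∧
        LinearMap.range B.mulVecLin ≤ LinearMap.range D.mulVecLin)) ↔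
      (LinearMap.range (E * A * D).mulVecLin = LinearMap.range E.mulVecLin ∧
        LinearMap.ker (E * A * D).mulVecLin = LinearMap.ker D.mulVecLin) := by
    constructor
    · rintro ⟨⟨C, hC1, hC2⟩, ⟨B, hB1, hB2⟩⟩
      constructor
      · apply le_antisymm
        · rw [Matrix.mul_assoc E A D, Matrix.mulVecLin_mul]
          exact LinearMap.range_comp_le_range _ _
        · rintro x ⟨v, rfl⟩
          have hv : B.mulVecLin v ∈ LinearMap.range D.mulVecLin :=
            hB2 (LinearMap.mem_range_self _ v)
          obtain ⟨w, hw⟩ := hv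
          refine ⟨w, ?_⟩
          have : (E * A * B).mulVecLin v = E.mulVecLin v := by rw [hB1]
          rw [← this]
          calc (E * A * D).mulVecLin w = (E * A).mulVecLin (D.mulVecLin w) := by
                rw [Matrix.mulVecLin_mul]; rfl
            _ = (E * A).mulVecLin (B.mulVecLin v) := by rw [hw]
            _ = (E * A * B).mulVecLin v := by rw [Matrix.mulVecLin_mul (E * A) B]; rfl
      · apply le_antisymm
        · intro v hv
          have hv' : (A * D).mulVecLin v ∈ LinearMap.ker E.mulVecLin := by
            rw [LinearMap.mem_ker] at hv ⊢
            rw [Matrix.mul_assoc E A D, Matrix.mulVecLin_mul] at hv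
            exact hv
          have := hC2 hv'
          rw [LinearMap.mem_ker] at this ⊢
          have h3 : (C * A * D).mulVecLin v = 0 := by
            rw [Matrix.mul_assoc C A D, Matrix.mulVecLin_mul]
            exact this
          rw [← hC1]; exact h3
        · intro v hv
          rw [LinearMap.mem_ker] at hv ⊢
          rw [show E * A * D = E * A * D by rfl, Matrix.mulVecLin_mul,
            LinearMap.comp_apply, hv, map_zero]
    · rintro ⟨hr, hk⟩
      constructor
      · obtain ⟨G, hG⟩ := factor_ker (E * A * D).mulVecLin D.mulVecLin (le_of_eq hk)
        refine ⟨LinearMap.toMatrix' G * E, ?_, ?_⟩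
        · apply mulVecLin_inj
          rw [show LinearMap.toMatrix' G * E * A * D =
            LinearMap.toMatrix' G * (E * A * D) by rw [Matrix.mul_assoc, Matrix.mul_assoc, Matrix.mul_assoc], Matrix.mulVecLin_mul]
          have : (LinearMap.toMatrix' G).mulVecLin = G := by
            rw [← Matrix.toLin'_apply', Matrix.toLin'_toMatrix']
          rw [this, hG]
        · rw [Matrix.mulVecLin_mul]
          intro v hv
          rw [LinearMap.mem_ker] at hv ⊢
          rw [LinearMap.comp_apply, hv, map_zero]
      · obtain ⟨H, hH⟩ := factor_range (E * A * D).mulVecLin E.mulVecLin (le_of_eq hr.symm)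
        refine ⟨D * LinearMap.toMatrix' H, ?_, ?_⟩
        · apply mulVecLin_inj
          rw [(Matrix.mul_assoc (E * A) D (LinearMap.toMatrix' H)).symm, Matrix.mulVecLin_mul]
          have : (LinearMap.toMatrix' H).mulVecLin = H := by
            rw [← Matrix.toLin'_apply', Matrix.toLin'_toMatrix']
          rw [this, hH]
        · rw [Matrix.mulVecLin_mul]
          exact LinearMap.range_comp_le_range _ _
  refine ⟨main, ?_⟩
  intro h
  obtain ⟨hr, hk⟩ := main.mp h
  have h1 : (E * A * D).rank = E.rank := by
    unfold Matrix.rank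
    rw [hr]
  have h2 : (E * A * D).rank = D.rank := by
    have e1 := LinearMap.finrank_range_add_finrank_ker (E * A * D).mulVecLin
    have e2 := LinearMap.finrank_range_add_finrank_ker D.mulVecLin
    unfold Matrix.rank
    rw [hk] at e1
    omega
  rw [← h1, h2]
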